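/- If X₁, X₂ are i.i.d. positive continuous random variables following Pareto type-I with shape α > 0, then the random variable max(X₁/X₂, X₂/X₁) also follows the Pareto type-I distribution with shape α, i.e., P(max(X₁/X₂, X₂/X₁) ≤ x) = 1 − x^{-α} for x ≥ 1. -/

import Mathlib

open MeasureTheory

lemma pareto_integrableOn_Ioi (β c : ℝ) (hβ : 0 < β) (hc : 0 < c) :
    IntegrableOn (fun t : ℝ => β * t ^ (-(β + 1))) (Set.Ioi c) := by
  exact (integrableOn_Ioi_rpow_of_lt (by linarith) hc).const_mul β

lemma pareto_int_Ioi (β c : ℝ) (hβ : 0 < β) (hc : 0 < c) :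
    ∫ t in Set.Ioi c, β * t ^ (-(β + 1)) = c ^ (-β) := by
  rw [MeasureTheory.integral_const_mul,
    integral_Ioi_rpow_of_lt (by linarith : -(β+1) < -1) hc]
  have : -(β + 1) + 1 = -β := by ring
  rw [this]
  field_simp

lemma pareto_int_Ioc (β c b : ℝ) (hβ : 0 < β) (hc : 0 < c) (hcb : c ≤ b) :
    ∫ t in Set.Ioc c b, β * t ^ (-(β + 1)) = c ^ (-β) - b ^ (-β) := by
  rw [← intervalIntegral.integral_of_le hcb, intervalIntegral.integral_const_mul,
    integral_rpow (Or.inr ⟨by intro h; linarith [hβ] , by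
      rw [Set.uIcc_of_le hcb]
      intro h
      exact absurd (h.1) (by linarith)⟩)]
  have : -(β + 1) + 1 = -β := by ring
  rw [this]
  field_simp [hβ.ne']
  ring

/-- If `X₁, X₂` are i.i.d. Pareto type-I with shape `α > 0`, then
`max(X₁/X₂, X₂/X₁)` is also Pareto type-I with shape `α`:
`P(max(X₁/X₂, X₂/X₁) ≤ x) = 1 − x^{-α}` for `x ≥ 1`. -/
theorem pareto_max_ratio_characterization (α : ℝ) (hα : 0 < α) (x : ℝ) (hx : 1 ≤ x) :
    ∫ x₁ in Set.Ioi (1:ℝ), (∫ x₂ in Set.Ioi (1:ℝ),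
        (if max (x₁ / x₂) (x₂ / x₁) ≤ x then (1:ℝ) else 0) * (α * x₂ ^ (-(α + 1))))
      * (α * x₁ ^ (-(α + 1)))
    = 1 - x ^ (-α) := by
  have hx0 : (0:ℝ) < x := lt_of_lt_of_le one_pos hx
  -- Step 1: compute the inner integral
  have inner : ∀ x₁ : ℝ, x₁ ∈ Set.Ioi (1:ℝ) →
      (∫ x₂ in Set.Ioi (1:ℝ),
        (if max (x₁ / x₂) (x₂ / x₁) ≤ x then (1:ℝ) else 0) * (α * x₂ ^ (-(α + 1))))
      = (max 1 (x₁/x)) ^ (-α) - (x * x₁) ^ (-α) := by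
    intro x₁ hx₁
    rw [Set.mem_Ioi] at hx₁
    have hx₁0 : (0:ℝ) < x₁ := lt_trans one_pos hx₁
    have key : ∀ x₂ : ℝ, x₂ ∈ Set.Ioi (1:ℝ) →
        (if max (x₁ / x₂) (x₂ / x₁) ≤ x then (1:ℝ) else 0) * (α * x₂ ^ (-(α + 1)))
        = Set.indicator (Set.Icc (x₁/x) (x*x₁)) (fun t => α * t ^ (-(α + 1))) x₂ := by
      intro x₂ hx₂
      rw [Set.mem_Ioi] at hx₂
      have hx₂0 : (0:ℝ) < x₂ := lt_trans one_pos hx₂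
      have hiff : max (x₁ / x₂) (x₂ / x₁) ≤ x ↔ x₂ ∈ Set.Icc (x₁/x) (x*x₁) := by
        rw [max_le_iff, Set.mem_Icc, div_le_iff₀ hx₂0, div_le_iff₀ hx₁0, div_le_iff₀ hx0]
        constructor
        · rintro ⟨h1, h2⟩; exact ⟨by nlinarith, by nlinarith⟩
        · rintro ⟨h1, h2⟩; exact ⟨by nlinarith, by nlinarith⟩
      by_cases h : max (x₁ / x₂) (x₂ / x₁) ≤ x
      · rw [if_pos h, Set.indicator_of_mem (hiff.mp h), one_mul]
      · rw [if_neg h, Set.indicator_of_notMem (fun hm => h (hiff.mpr hm)), zero_mul]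
    rw [MeasureTheory.setIntegral_congr_fun measurableSet_Ioi key,
      MeasureTheory.setIntegral_indicator measurableSet_Icc]
    have hset : (Set.Ioi (1:ℝ) ∩ Set.Icc (x₁/x) (x*x₁) : Set ℝ) =ᵐ[volume]
        Set.Ioc (max 1 (x₁/x)) (x*x₁) := by
      by_cases h : x₁/x ≤ 1
      · have : Set.Ioi (1:ℝ) ∩ Set.Icc (x₁/x) (x*x₁) = Set.Ioc 1 (x*x₁) := by
          ext t
          simp only [Set.mem_inter_iff, Set.mem_Ioi, Set.mem_Icc, Set.mem_Ioc]
          constructor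
          · rintro ⟨h1, _, h3⟩; exact ⟨h1, h3⟩
          · rintro ⟨h1, h2⟩; exact ⟨h1, le_of_lt (lt_of_le_of_lt h h1), h2⟩
        rw [this, max_eq_left h]
        exact Filter.EventuallyEq.rfl
      · push_neg at h
        have : Set.Ioi (1:ℝ) ∩ Set.Icc (x₁/x) (x*x₁) = Set.Icc (x₁/x) (x*x₁) := by
          apply Set.inter_eq_right.mpr
          intro t ht
          exact Set.mem_Ioi.mpr (lt_of_lt_of_le h ht.1)
        rw [this, max_eq_right h.le]
        exact (MeasureTheory.Ioc_ae_eq_Icc).symm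
    rw [MeasureTheory.setIntegral_congr_set hset]
    have hmaxpos : (0:ℝ) < max 1 (x₁/x) := lt_of_lt_of_le one_pos (le_max_left _ _)
    have hmaxle : max 1 (x₁/x) ≤ x * x₁ := by
      apply max_le
      · nlinarith
      · rw [div_le_iff₀ hx0]
        nlinarith [mul_nonneg (mul_nonneg hx₁0.le (sub_nonneg.mpr hx))
          (by linarith : (0:ℝ) ≤ x + 1)]
    exact pareto_int_Ioc α _ _ hα hmaxpos hmaxle
  rw [MeasureTheory.setIntegral_congr_fun measurableSet_Ioi
    (fun x₁ hx₁ => by rw [inner x₁ hx₁])]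
  -- Step 2: split the outer integral at x
  have hsplit : Set.Ioc (1:ℝ) x ∪ Set.Ioi x = Set.Ioi 1 := Set.Ioc_union_Ioi_eq_Ioi hx
  have h2α : (0:ℝ) < 2*α := by linarith
  -- the function on Ioc 1 x
  have f1eq : ∀ x₁ : ℝ, x₁ ∈ Set.Ioc (1:ℝ) x →
      ((max 1 (x₁/x)) ^ (-α) - (x * x₁) ^ (-α)) * (α * x₁ ^ (-(α + 1)))
      = α * x₁ ^ (-(α+1)) - (x ^ (-α) / 2) * (2*α * x₁ ^ (-(2*α+1))) := by
    intro x₁ hx₁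
    obtain ⟨h1, h2⟩ := hx₁
    have hx₁0 : (0:ℝ) < x₁ := lt_trans one_pos h1
    have hmax : max 1 (x₁/x) = 1 := max_eq_left (by rw [div_le_one hx0]; exact h2)
    rw [hmax, Real.one_rpow, Real.mul_rpow hx0.le hx₁0.le]
    have h1 : x₁ ^ (-α) * x₁ ^ (-(α+1)) = x₁ ^ (-(2*α+1)) := by
      rw [← Real.rpow_add hx₁0]; ring_nf
    rw [← h1]; ring
  have f2eq : ∀ x₁ : ℝ, x₁ ∈ Set.Ioi x →
      ((max 1 (x₁/x)) ^ (-α) - (x * x₁) ^ (-α)) * (α * x₁ ^ (-(α + 1)))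
      = ((x ^ α - x ^ (-α)) / 2) * (2*α * x₁ ^ (-(2*α+1))) := by
    intro x₁ hx₁
    rw [Set.mem_Ioi] at hx₁
    have hx₁0 : (0:ℝ) < x₁ := lt_of_le_of_lt hx0.le hx₁
    have hmax : max 1 (x₁/x) = x₁/x := max_eq_right (by rw [le_div_iff₀ hx0]; nlinarith)
    rw [hmax, Real.div_rpow hx₁0.le hx0.le, Real.mul_rpow hx0.le hx₁0.le]
    have hd : x₁ ^ (-α) / x ^ (-α) = x₁ ^ (-α) * x ^ α := by
      rw [Real.rpow_neg hx0.le, div_inv_eq_mul]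
    have h1 : x₁ ^ (-α) * x₁ ^ (-(α+1)) = x₁ ^ (-(2*α+1)) := by
      rw [← Real.rpow_add hx₁0]; ring_nf
    rw [hd, ← h1]; ring
  -- integrability on the two pieces
  have hi1 : IntegrableOn (fun x₁ : ℝ =>
      ((max 1 (x₁/x)) ^ (-α) - (x * x₁) ^ (-α)) * (α * x₁ ^ (-(α + 1))))
      (Set.Ioc (1:ℝ) x) := by
    apply (MeasureTheory.Integrable.sub
      ((pareto_integrableOn_Ioi α 1 hα one_pos).mono_set Set.Ioc_subset_Ioi_self)
      (((pareto_integrableOn_Ioi (2*α) 1 h2α one_pos).mono_set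
        Set.Ioc_subset_Ioi_self).const_mul (x ^ (-α) / 2))).congr
    exact (MeasureTheory.ae_restrict_iff' measurableSet_Ioc).mpr
      (Filter.Eventually.of_forall (fun x₁ hx₁ => (f1eq x₁ hx₁).symm))
  have hi2 : IntegrableOn (fun x₁ : ℝ =>
      ((max 1 (x₁/x)) ^ (-α) - (x * x₁) ^ (-α)) * (α * x₁ ^ (-(α + 1))))
      (Set.Ioi x) := by
    apply ((pareto_integrableOn_Ioi (2*α) x h2α hx0).const_mul
      ((x ^ α - x ^ (-α)) / 2)).congr
    exact (MeasureTheory.ae_restrict_iff' measurableSet_Ioi).mpr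
      (Filter.Eventually.of_forall (fun x₁ hx₁ => (f2eq x₁ hx₁).symm))
  rw [← hsplit, MeasureTheory.setIntegral_union (Set.Ioc_disjoint_Ioi le_rfl)
    measurableSet_Ioi hi1 hi2,
    MeasureTheory.setIntegral_congr_fun measurableSet_Ioc f1eq,
    MeasureTheory.setIntegral_congr_fun measurableSet_Ioi f2eq]
  -- compute each piece
  rw [MeasureTheory.integral_sub
      ((pareto_integrableOn_Ioi α 1 hα one_pos).mono_set Set.Ioc_subset_Ioi_self)
      (((pareto_integrableOn_Ioi (2*α) 1 h2α one_pos).mono_set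
        Set.Ioc_subset_Ioi_self).const_mul (x ^ (-α) / 2)),
    MeasureTheory.integral_const_mul (x ^ (-α) / 2),
    MeasureTheory.integral_const_mul ((x ^ α - x ^ (-α)) / 2),
    pareto_int_Ioc α 1 x hα one_pos hx, pareto_int_Ioc (2*α) 1 x h2α one_pos hx,
    pareto_int_Ioi (2*α) x h2α hx0]
  have e1 : x ^ α * x ^ (-(2*α)) = x ^ (-α) := by
    rw [← Real.rpow_add hx0]; ring_nf
  simp only [Real.one_rpow]
  linear_combination e1 / 2
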